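/- arXiv:2312.03681 — 4 statements merged into one kernel-verified Lean document; each statement's English description precedes it below -/
import Mathlib

section
/- Let s be a k × k binary image (a function from [k] × [k] to {0,1}). Then the minimum number of pixels whose values must be changed to make s border-connected is at most k²/4. -/
open Finset

/-- Two pixels are adjacent if they are at Manhattan distance 1. -/
def Adj (p q : ℕ × ℕ) : Prop :=
  (p.1 = q.1 ∧ (p.2 + 1 = q.2 ∨ q.2 + 1 = p.2)) ∨
  (p.2 = q.2 ∧ (p.1 + 1 = q.1 ∨ q.1 + 1 = p.1))

/-- A pixel lies inside the `k × k` square (0-indexed coordinates). -/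
def InSquare (k : ℕ) (p : ℕ × ℕ) : Prop := p.1 < k ∧ p.2 < k

/-- A pixel is on the border of the `k × k` square. -/
def OnBorder (k : ℕ) (p : ℕ × ℕ) : Prop :=
  InSquare k p ∧ (p.1 = 0 ∨ p.1 = k - 1 ∨ p.2 = 0 ∨ p.2 = k - 1)

/-- One step of the image graph of the `k × k` image `s`: both pixels are black,
inside the square and adjacent. -/
def BlackAdj (k : ℕ) (s : ℕ × ℕ → Bool) (p q : ℕ × ℕ) : Prop :=
  InSquare k p ∧ InSquare k q ∧ s p = true ∧ s q = true ∧ Adj p q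

/-- A `k × k` image is border-connected if every black pixel is connected, through
black pixels, to a black pixel on the border. -/
def BorderConnected (k : ℕ) (s : ℕ × ℕ → Bool) : Prop :=
  ∀ p, InSquare k p → s p = true →
    ∃ q, OnBorder k q ∧ s q = true ∧ Relation.ReflTransGen (BlackAdj k s) p q

/-- Number of pixels of the `k × k` square on which `s` and `t` differ. -/
def diffCount (k : ℕ) (s t : ℕ × ℕ → Bool) : ℕ :=
  ((Finset.range k ×ˢ Finset.range k).filter (fun p => s p ≠ t p)).card

/-- Distance of a `k × k` image to border-connectedness. -/
noncomputable def distBC (k : ℕ) (s : ℕ × ℕ → Bool) : ℕ :=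
  sInf {d | ∃ t, BorderConnected k t ∧ diffCount k s t = d}

/-- An `n × n` image is connected if its image graph is connected. -/
def ImgConnected (n : ℕ) (M : ℕ × ℕ → Bool) : Prop :=
  ∀ p q, InSquare n p → InSquare n q → M p = true → M q = true →
    Relation.ReflTransGen (BlackAdj n M) p q

/-- Distance of an `n × n` image to connectedness. -/
noncomputable def distConn (n : ℕ) (M : ℕ × ℕ → Bool) : ℕ :=
  sInf {d | ∃ t, ImgConnected n t ∧ diffCount n M t = d}

/-- The subimage of `s` whose origin is at `(u, v)`. -/
def shiftIm (s : ℕ × ℕ → Bool) (u v : ℕ) : ℕ × ℕ → Bool :=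
  fun p => s (p.1 + u, p.2 + v)

/-- The image graph of an `n × n` image: vertices are black pixels inside the square,
edges connect pixels at Manhattan distance 1. -/
def imageGraph (n : ℕ) (M : ℕ × ℕ → Bool) :
    SimpleGraph {p : ℕ × ℕ // InSquare n p ∧ M p = true} where
  Adj := fun p q => Adj p.1 q.1
  symm := ⟨by intro p q h; unfold Adj at *; omega⟩
  loopless := ⟨by intro p h; unfold Adj at h; omega⟩

/-- The number of connected components of the image graph of an `n × n` image. -/
noncomputable def numComponents (n : ℕ) (M : ℕ × ℕ → Bool) : ℕ :=
  Nat.card (imageGraph n M).ConnectedComponent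

lemma row_path {k : ℕ} {t : ℕ × ℕ → Bool} {r : ℕ} (hr : r < k)
    (hrow : ∀ j, j < k → t (r, j) = true) :
    ∀ j, j < k → Relation.ReflTransGen (BlackAdj k t) (r, j) (r, 0) := by
  intro j
  induction j with
  | zero => intro _; exact .refl
  | succ n ih =>
    intro h
    have hn : n < k := Nat.lt_of_succ_lt h
    refine Relation.ReflTransGen.head ?_ (ih hn)
    exact ⟨⟨hr, h⟩, ⟨hr, hn⟩, hrow _ h, hrow _ hn, Or.inl ⟨rfl, Or.inr rfl⟩⟩

lemma stripe_bc (k ε : ℕ) (hε : ε < 3) (s : ℕ × ℕ → Bool) :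
    BorderConnected k (fun p => if p.1 % 3 = ε then true else s p) := by
  intro p hp hpt
  set t : ℕ × ℕ → Bool := fun p => if p.1 % 3 = ε then true else s p with ht
  have hk : 0 < k := lt_of_le_of_lt (Nat.zero_le _) hp.1
  by_cases hmod : p.1 % 3 = ε
  · -- p lies on a filled row
    have hrow : ∀ j, j < k → t (p.1, j) = true := by
      intro j _; simp only [ht]; exact if_pos hmod
    refine ⟨(p.1, 0), ⟨⟨hp.1, hk⟩, Or.inr (Or.inr (Or.inl rfl))⟩, hrow 0 hk, ?_⟩
    exact row_path hp.1 hrow p.2 hp.2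
  · by_cases h0 : p.1 = 0
    · exact ⟨p, ⟨hp, Or.inl h0⟩, hpt, .refl⟩
    · by_cases h1 : p.1 = k - 1
      · exact ⟨p, ⟨hp, Or.inr (Or.inl h1)⟩, hpt, .refl⟩
      · -- interior row: one of the two neighboring rows is filled
        have hp1 : p.1 < k := hp.1
        have hex : (p.1 - 1) % 3 = ε ∨ (p.1 + 1) % 3 = ε := by omega
        obtain ⟨r', hr'mod, hr'adj, hr'lt⟩ :
            ∃ r', r' % 3 = ε ∧ (p.1 + 1 = r' ∨ r' + 1 = p.1) ∧ r' < k := by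
          rcases hex with h | h
          · exact ⟨p.1 - 1, h, Or.inr (by omega), by omega⟩
          · exact ⟨p.1 + 1, h, Or.inl rfl, by omega⟩
        have hrow : ∀ j, j < k → t (r', j) = true := by
          intro j _; simp only [ht]; exact if_pos hr'mod
        refine ⟨(r', 0), ⟨⟨hr'lt, hk⟩, Or.inr (Or.inr (Or.inl rfl))⟩, hrow 0 hk, ?_⟩
        refine Relation.ReflTransGen.head ?_ (row_path hr'lt hrow p.2 hp.2)
        exact ⟨hp, ⟨hr'lt, hp.2⟩, hpt, hrow p.2 hp.2, Or.inr ⟨rfl, hr'adj⟩⟩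

lemma distBC_le (k : ℕ) (s t : ℕ × ℕ → Bool) (h : BorderConnected k t) :
    distBC k s ≤ diffCount k s t :=
  Nat.sInf_le ⟨t, h, rfl⟩

/-- Claim 3.2: the distance of any `k × k` image to border-connectedness is at most
`k²/4`. -/
theorem dist_to_border_connectedness_le (k : ℕ) (s : ℕ × ℕ → Bool) :
    ((distBC k s : ℝ)) ≤ (k : ℝ) ^ 2 / 4 := by
  set d := distBC k s with hd
  -- the four candidate images
  set t0 : ℕ × ℕ → Bool := fun _ => false with ht0
  set f : ℕ → ℕ × ℕ → Bool := fun ε p => if p.1 % 3 = ε then true else s p with hf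
  have hbc0 : BorderConnected k t0 := by intro p _ hp; simp [ht0] at hp
  have hle0 : d ≤ diffCount k s t0 := distBC_le k s t0 hbc0
  have hle : ∀ ε, ε < 3 → d ≤ diffCount k s (f ε) :=
    fun ε hε => distBC_le k s (f ε) (stripe_bc k ε hε s)
  have hsum : diffCount k s t0 + diffCount k s (f 0) + diffCount k s (f 1)
      + diffCount k s (f 2) = k ^ 2 := by
    unfold diffCount
    rw [Finset.card_filter, Finset.card_filter, Finset.card_filter, Finset.card_filter,
      ← Finset.sum_add_distrib, ← Finset.sum_add_distrib, ← Finset.sum_add_distrib]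
    have : ∀ p ∈ Finset.range k ×ˢ Finset.range k,
        ((if s p ≠ t0 p then 1 else 0) + (if s p ≠ f 0 p then 1 else 0)
          + (if s p ≠ f 1 p then 1 else 0) + (if s p ≠ f 2 p then 1 else 0)) = 1 := by
      intro p _
      have h3 : p.1 % 3 = 0 ∨ p.1 % 3 = 1 ∨ p.1 % 3 = 2 := by omega
      cases hs : s p <;> rcases h3 with h | h | h <;> simp [ht0, hf, hs, h]
    rw [Finset.sum_congr rfl this]
    simp [Finset.card_product, sq]
  have h4 : 4 * d ≤ k ^ 2 := by
    have a := hle 0 (by norm_num)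
    have b := hle 1 (by norm_num)
    have c := hle 2 (by norm_num)
    omega
  have h4' : (4 : ℝ) * (d : ℝ) ≤ (k : ℝ) ^ 2 := by exact_mod_cast h4
  linarith
end

section
/- Let s be a square image of level i with children ch(s), the four squares of level i+1 inside it, and let lc denote the distance to border-connectedness and elc(s) = min(2k_i, lc(s)) where k_i is the side length of s. Then lc(s) ≤ elc(s) + Σ_{q ∈ ch(s)} lc(q). -/
open Finset

-- walk along row m down to (m,0)
lemma aux_row (k m : ℕ) (hk : k = 2*m+1) (T : ℕ×ℕ→Bool)
    (hT : ∀ p : ℕ×ℕ, p.1 < k → p.2 < k → (p.1 = m ∨ p.2 = m) → T p = true) :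
    ∀ j, j < k → Relation.ReflTransGen (BlackAdj k T) (m, j) (m, 0) := by
  intro j
  induction j with
  | zero => intro _; exact Relation.ReflTransGen.refl
  | succ n ih =>
    intro h
    refine Relation.ReflTransGen.head ?_ (ih (by omega))
    refine ⟨⟨by omega, by omega⟩, ⟨by omega, by omega⟩, hT _ (by omega) (by omega) (by simp),
      hT _ (by omega) (by omega) (by simp), ?_⟩
    exact Or.inl ⟨rfl, Or.inr rfl⟩

lemma aux_colup (k m : ℕ) (hk : k = 2*m+1) (T : ℕ×ℕ→Bool)
    (hT : ∀ p : ℕ×ℕ, p.1 < k → p.2 < k → (p.1 = m ∨ p.2 = m) → T p = true) :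
    ∀ d, d ≤ m → Relation.ReflTransGen (BlackAdj k T) (m - d, m) (m, m) := by
  intro d
  induction d with
  | zero => intro _; simp only [Nat.sub_zero]; exact Relation.ReflTransGen.refl
  | succ n ih =>
    intro h
    refine Relation.ReflTransGen.head ?_ (ih (by omega))
    refine ⟨⟨by omega, by omega⟩, ⟨by omega, by omega⟩, hT _ (by omega) (by omega) (by simp),
      hT _ (by omega) (by omega) (by simp), ?_⟩
    exact Or.inr ⟨rfl, Or.inl (show m - (n+1) + 1 = m - n by omega)⟩

lemma aux_coldown (k m : ℕ) (hk : k = 2*m+1) (T : ℕ×ℕ→Bool)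
    (hT : ∀ p : ℕ×ℕ, p.1 < k → p.2 < k → (p.1 = m ∨ p.2 = m) → T p = true) :
    ∀ d, d ≤ m → Relation.ReflTransGen (BlackAdj k T) (m + d, m) (m, m) := by
  intro d
  induction d with
  | zero => intro _; simp only [Nat.add_zero]; exact Relation.ReflTransGen.refl
  | succ n ih =>
    intro h
    refine Relation.ReflTransGen.head ?_ (ih (by omega))
    refine ⟨⟨by omega, by omega⟩, ⟨by omega, by omega⟩, hT _ (by omega) (by omega) (by simp),
      hT _ (by omega) (by omega) (by simp), ?_⟩
    exact Or.inr ⟨rfl, Or.inr rfl⟩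

lemma aux_cross (k m : ℕ) (hk : k = 2*m+1) (T : ℕ×ℕ→Bool)
    (hT : ∀ p : ℕ×ℕ, p.1 < k → p.2 < k → (p.1 = m ∨ p.2 = m) → T p = true) :
    ∀ c : ℕ×ℕ, c.1 < k → c.2 < k → (c.1 = m ∨ c.2 = m) →
      Relation.ReflTransGen (BlackAdj k T) c (m, 0) := by
  intro c h1 h2 h3
  rcases h3 with h3 | h3
  · have : c = (m, c.2) := by ext <;> simp [h3]
    rw [this]; exact aux_row k m hk T hT c.2 h2
  · have hcol : Relation.ReflTransGen (BlackAdj k T) c (m, m) := by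
      rcases le_or_gt c.1 m with h | h
      · have : c = (m - (m - c.1), c.2) := by ext <;> simp <;> omega
        rw [this, h3]; exact aux_colup k m hk T hT (m - c.1) (by omega)
      · have : c = (m + (c.1 - m), c.2) := by ext <;> simp <;> omega
        rw [this, h3]; exact aux_coldown k m hk T hT (c.1 - m) (by omega)
    exact hcol.trans (aux_row k m hk T hT m (by omega))

lemma aux_lift (k m u v : ℕ) (hk : k = 2*m+1) (hu : u = 0 ∨ u = m+1) (hv : v = 0 ∨ v = m+1)
    (T tc : ℕ×ℕ→Bool) (hagree : ∀ a b : ℕ, a < m → b < m → T (a+u, b+v) = tc (a,b)) :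
    ∀ p q : ℕ×ℕ, Relation.ReflTransGen (BlackAdj m tc) p q →
      Relation.ReflTransGen (BlackAdj k T) (p.1+u, p.2+v) (q.1+u, q.2+v) := by
  intro p q h
  refine Relation.ReflTransGen.lift (fun p : ℕ×ℕ => (p.1+u, p.2+v)) ?_ p q h
  rintro a b ⟨⟨ha1, ha2⟩, ⟨hb1, hb2⟩, hta, htb, hadj⟩
  dsimp only [Function.onFun]
  refine ⟨⟨by omega, by omega⟩, ⟨by omega, by omega⟩, ?_, ?_, ?_⟩
  · rw [hagree a.1 a.2 ha1 ha2]; exact hta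
  · rw [hagree b.1 b.2 hb1 hb2]; exact htb
  · rcases hadj with ⟨h1, h2⟩ | ⟨h1, h2⟩
    · exact Or.inl ⟨by dsimp only; omega, by dsimp only; omega⟩
    · exact Or.inr ⟨by dsimp only; omega, by dsimp only; omega⟩

lemma aux_child (k m u v : ℕ) (hk : k = 2*m+1) (hm : 1 ≤ m)
    (hu : u = 0 ∨ u = m+1) (hv : v = 0 ∨ v = m+1)
    (T tc : ℕ×ℕ→Bool)
    (hTc : ∀ p : ℕ×ℕ, p.1 < k → p.2 < k → (p.1 = m ∨ p.2 = m) → T p = true)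
    (hagree : ∀ a b : ℕ, a < m → b < m → T (a+u, b+v) = tc (a,b))
    (htc : BorderConnected m tc) :
    ∀ p : ℕ×ℕ, p.1 < m → p.2 < m → tc p = true →
      ∃ q, OnBorder k q ∧ T q = true ∧
        Relation.ReflTransGen (BlackAdj k T) (p.1+u, p.2+v) q := by
  intro p hp1 hp2 hblack
  obtain ⟨q', ⟨⟨hq1, hq2⟩, hqb⟩, hq'black, hpath⟩ := htc p ⟨hp1, hp2⟩ hblack
  have hlift := aux_lift k m u v hk hu hv T tc hagree p q' hpath
  have hTg : T (q'.1+u, q'.2+v) = true := by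
    rw [hagree q'.1 q'.2 hq1 hq2]; exact hq'black
  -- target border pixel (m, 0)
  have hm0b : OnBorder k (m, 0) := ⟨⟨by omega, by omega⟩, by right; right; left; rfl⟩
  have hm0T : T (m, 0) = true := hTc _ (by omega) (by omega) (by left; rfl)
  -- either the lifted endpoint is on the full border, or it is adjacent to a cross pixel
  by_cases hdir : q'.1+u = 0 ∨ q'.1+u = k-1 ∨ q'.2+v = 0 ∨ q'.2+v = k-1
  · exact ⟨(q'.1+u, q'.2+v), ⟨⟨by omega, by omega⟩, hdir⟩, hTg, hlift⟩
  · -- find a cross neighbour c of (q'.1+u, q'.2+v)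
    push_neg at hdir
    have hc : ∃ c : ℕ×ℕ, (c.1 = m ∨ c.2 = m) ∧ c.1 < k ∧ c.2 < k ∧
        Adj (q'.1+u, q'.2+v) c := by
      rcases hqb with h | h | h | h
      · -- q'.1 = 0, so u = m+1 (else on border)
        have hu' : u = m+1 := by rcases hu with h' | h' <;> omega
        exact ⟨(m, q'.2+v), Or.inl rfl, by omega, by omega,
          Or.inr ⟨rfl, Or.inr (by dsimp only; omega)⟩⟩
      · -- q'.1 = m-1, so u = 0
        have hu' : u = 0 := by rcases hu with h' | h' <;> omega
        exact ⟨(m, q'.2+v), Or.inl rfl, by omega, by omega,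
          Or.inr ⟨rfl, Or.inl (by dsimp only; omega)⟩⟩
      · have hv' : v = m+1 := by rcases hv with h' | h' <;> omega
        exact ⟨(q'.1+u, m), Or.inr rfl, by omega, by omega,
          Or.inl ⟨rfl, Or.inr (by dsimp only; omega)⟩⟩
      · have hv' : v = 0 := by rcases hv with h' | h' <;> omega
        exact ⟨(q'.1+u, m), Or.inr rfl, by omega, by omega,
          Or.inl ⟨rfl, Or.inl (by dsimp only; omega)⟩⟩
    obtain ⟨c, hcross, hc1, hc2, hadj⟩ := hc
    have hTc' : T c = true := hTc c hc1 hc2 hcross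
    have step : BlackAdj k T (q'.1+u, q'.2+v) c :=
      ⟨⟨by omega, by omega⟩, ⟨hc1, hc2⟩, hTg, hTc', hadj⟩
    exact ⟨(m, 0), hm0b, hm0T,
      (hlift.trans (Relation.ReflTransGen.single step)).trans
        (aux_cross k m hk T hTc c hc1 hc2 hcross)⟩

/-- Claim 3.1: for a square `s` of side `k` (with `k + 1 = 2^t`, `t ≥ 3`, so that `s`
splits into four children of side `(k-1)/2` and a middle cross of at most `2k`
pixels), `lc(s) ≤ elc(s) + ∑_{q ∈ ch(s)} lc(q)`, where `lc` is the distance to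
border-connectedness and `elc(s) = min(2k, lc(s))`. -/
theorem parent_children_cost_relation (k : ℕ)
    (hk : ∃ t : ℕ, 3 ≤ t ∧ k + 1 = 2 ^ t) (s : ℕ × ℕ → Bool) :
    distBC k s ≤ min (2 * k) (distBC k s) +
      (distBC ((k - 1) / 2) (shiftIm s 0 0) +
       distBC ((k - 1) / 2) (shiftIm s 0 ((k + 1) / 2)) +
       distBC ((k - 1) / 2) (shiftIm s ((k + 1) / 2) 0) +
       distBC ((k - 1) / 2) (shiftIm s ((k + 1) / 2) ((k + 1) / 2))) := by
  obtain ⟨t, ht3, htk⟩ := hk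
  have hdvd : 2 ∣ k + 1 := htk ▸ dvd_pow_self 2 (by omega)
  have hk8 : 8 ≤ k + 1 := by
    rw [htk]
    calc (8:ℕ) = 2 ^ 3 := by norm_num
      _ ≤ 2 ^ t := Nat.pow_le_pow_right (by norm_num) ht3
  set m := (k - 1) / 2 with hmdef
  have hkm : k = 2 * m + 1 := by omega
  have hm3 : 3 ≤ m := by omega
  have h12 : (k + 1) / 2 = m + 1 := by omega
  rw [h12]
  rcases le_total (distBC k s) (2 * k) with hle | hge
  · rw [min_eq_right hle]; exact Nat.le_add_right _ _
  rw [min_eq_left hge]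
  -- optimal border-connected versions of the four children
  have hex : ∀ u v : ℕ, ∃ tc, BorderConnected m tc ∧
      diffCount m (shiftIm s u v) tc = distBC m (shiftIm s u v) := by
    intro u v
    have hne : {d | ∃ tc, BorderConnected m tc ∧ diffCount m (shiftIm s u v) tc = d}.Nonempty :=
      ⟨_, fun _ => false, fun p _ hb => by simp at hb, rfl⟩
    exact Nat.sInf_mem hne
  obtain ⟨t00, hbc00, hd00⟩ := hex 0 0
  obtain ⟨t01, hbc01, hd01⟩ := hex 0 (m+1)
  obtain ⟨t10, hbc10, hd10⟩ := hex (m+1) 0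
  obtain ⟨t11, hbc11, hd11⟩ := hex (m+1) (m+1)
  -- the repaired parent image
  set T : ℕ × ℕ → Bool := fun p =>
    if p.1 = m ∨ p.2 = m then true
    else if p.1 < m then (if p.2 < m then t00 p else t01 (p.1, p.2 - (m+1)))
    else (if p.2 < m then t10 (p.1 - (m+1), p.2) else t11 (p.1 - (m+1), p.2 - (m+1)))
    with hTdef
  have hTc : ∀ p : ℕ × ℕ, p.1 < k → p.2 < k → (p.1 = m ∨ p.2 = m) → T p = true := by
    intro p _ _ h
    rw [hTdef]; exact if_pos h
  have hA00 : ∀ a b : ℕ, a < m → b < m → T (a + 0, b + 0) = t00 (a, b) := by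
    intro a b ha hb
    rw [hTdef]
    dsimp only
    split_ifs with h1 h2 h3 <;>
      first
        | (exact absurd h1 (by omega))
        | (exact absurd h2 (by omega))
        | (exact absurd h3 (by omega))
        | omega
        | (refine congrArg _ ?_; rw [Prod.mk.injEq]; constructor <;> omega)
  have hA01 : ∀ a b : ℕ, a < m → b < m → T (a + 0, b + (m+1)) = t01 (a, b) := by
    intro a b ha hb
    rw [hTdef]
    dsimp only
    split_ifs with h1 h2 h3 <;>
      first
        | (exact absurd h1 (by omega))
        | (exact absurd h2 (by omega))
        | (exact absurd h3 (by omega))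
        | omega
        | (refine congrArg _ ?_; rw [Prod.mk.injEq]; constructor <;> omega)
  have hA10 : ∀ a b : ℕ, a < m → b < m → T (a + (m+1), b + 0) = t10 (a, b) := by
    intro a b ha hb
    rw [hTdef]
    dsimp only
    split_ifs with h1 h2 h3 <;>
      first
        | (exact absurd h1 (by omega))
        | (exact absurd h2 (by omega))
        | (exact absurd h3 (by omega))
        | omega
        | (refine congrArg _ ?_; rw [Prod.mk.injEq]; constructor <;> omega)
  have hA11 : ∀ a b : ℕ, a < m → b < m → T (a + (m+1), b + (m+1)) = t11 (a, b) := by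
    intro a b ha hb
    rw [hTdef]
    dsimp only
    split_ifs with h1 h2 h3 <;>
      first
        | (exact absurd h1 (by omega))
        | (exact absurd h2 (by omega))
        | (exact absurd h3 (by omega))
        | omega
        | (refine congrArg _ ?_; rw [Prod.mk.injEq]; constructor <;> omega)
  -- T is border-connected
  have hBCT : BorderConnected k T := by
    intro p hp hblack
    by_cases hcr : p.1 = m ∨ p.2 = m
    · exact ⟨(m, 0), ⟨⟨by omega, by omega⟩, by right; right; left; rfl⟩,
        hTc _ (by omega) (by omega) (Or.inl rfl),
        aux_cross k m hkm T hTc p hp.1 hp.2 hcr⟩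
    · push_neg at hcr
      obtain ⟨hp1, hp2⟩ := hp
      rcases Nat.lt_or_ge p.1 m with hx | hx <;> rcases Nat.lt_or_ge p.2 m with hy | hy
      · -- region 00
        have hpe : ((p.1 + 0 : ℕ), (p.2 + 0 : ℕ)) = p := by
          rw [Nat.add_zero, Nat.add_zero]
        have hb' : t00 (p.1, p.2) = true := by
          rw [← hA00 p.1 p.2 hx hy, hpe]; exact hblack
        obtain ⟨q, hqb, hqT, hpath⟩ := aux_child k m 0 0 hkm (by omega)
          (Or.inl rfl) (Or.inl rfl) T t00 hTc hA00 hbc00 (p.1, p.2) hx hy hb'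
        exact ⟨q, hqb, hqT, by rw [← hpe]; exact hpath⟩
      · -- region 01 : p.2 > m
        have hy' : m + 1 ≤ p.2 := by omega
        have hpe : ((p.1 + 0 : ℕ), (p.2 - (m+1)) + (m+1)) = p := by
          rw [Prod.mk.injEq]; omega
        have hb' : t01 (p.1, p.2 - (m+1)) = true := by
          rw [← hA01 p.1 (p.2 - (m+1)) hx (by omega), hpe]; exact hblack
        obtain ⟨q, hqb, hqT, hpath⟩ := aux_child k m 0 (m+1) hkm (by omega)
          (Or.inl rfl) (Or.inr rfl) T t01 hTc hA01 hbc01 (p.1, p.2 - (m+1)) hx (by omega) hb'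
        exact ⟨q, hqb, hqT, by rw [← hpe]; exact hpath⟩
      · -- region 10
        have hx' : m + 1 ≤ p.1 := by omega
        have hpe : ((p.1 - (m+1)) + (m+1), (p.2 + 0 : ℕ)) = p := by
          rw [Prod.mk.injEq]; omega
        have hb' : t10 (p.1 - (m+1), p.2) = true := by
          rw [← hA10 (p.1 - (m+1)) p.2 (by omega) hy, hpe]; exact hblack
        obtain ⟨q, hqb, hqT, hpath⟩ := aux_child k m (m+1) 0 hkm (by omega)
          (Or.inr rfl) (Or.inl rfl) T t10 hTc hA10 hbc10 (p.1 - (m+1), p.2) (by omega) hy hb'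
        exact ⟨q, hqb, hqT, by rw [← hpe]; exact hpath⟩
      · -- region 11
        have hpe : ((p.1 - (m+1)) + (m+1), (p.2 - (m+1)) + (m+1)) = p := by
          rw [Prod.mk.injEq]; omega
        have hb' : t11 (p.1 - (m+1), p.2 - (m+1)) = true := by
          rw [← hA11 (p.1 - (m+1)) (p.2 - (m+1)) (by omega) (by omega), hpe]; exact hblack
        obtain ⟨q, hqb, hqT, hpath⟩ := aux_child k m (m+1) (m+1) hkm (by omega)
          (Or.inr rfl) (Or.inr rfl) T t11 hTc hA11 hbc11 (p.1 - (m+1), p.2 - (m+1))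
          (by omega) (by omega) hb'
        exact ⟨q, hqb, hqT, by rw [← hpe]; exact hpath⟩
  -- counting
  have hmain : distBC k s ≤ diffCount k s T := Nat.sInf_le ⟨T, hBCT, rfl⟩
  refine hmain.trans ?_
  rw [← hd00, ← hd01, ← hd10, ← hd11]
  -- split the filter set
  set G := Finset.range k ×ˢ Finset.range k with hG
  set C := G.filter (fun p => p.1 = m ∨ p.2 = m) with hC
  set Q00 := G.filter (fun p => (s p ≠ T p) ∧ p.1 < m ∧ p.2 < m) with hQ00
  set Q01 := G.filter (fun p => (s p ≠ T p) ∧ p.1 < m ∧ m < p.2) with hQ01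
  set Q10 := G.filter (fun p => (s p ≠ T p) ∧ m < p.1 ∧ p.2 < m) with hQ10
  set Q11 := G.filter (fun p => (s p ≠ T p) ∧ m < p.1 ∧ m < p.2) with hQ11
  have hsub : G.filter (fun p => s p ≠ T p) ⊆ C ∪ Q00 ∪ Q01 ∪ Q10 ∪ Q11 := by
    intro p hp
    rw [mem_filter] at hp
    obtain ⟨hpG, hP⟩ := hp
    simp only [mem_union, hC, hQ00, hQ01, hQ10, hQ11, mem_filter]
    have hpk := hpG
    rw [hG, mem_product, mem_range, mem_range] at hpk
    by_cases h1 : p.1 = m ∨ p.2 = m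
    · exact Or.inl (Or.inl (Or.inl (Or.inl ⟨hpG, h1⟩)))
    · push_neg at h1
      rcases Nat.lt_or_ge p.1 m with hx | hx <;> rcases Nat.lt_or_ge p.2 m with hy | hy
      · exact Or.inl (Or.inl (Or.inl (Or.inr ⟨hpG, hP, hx, hy⟩)))
      · exact Or.inl (Or.inl (Or.inr ⟨hpG, hP, hx, by omega⟩))
      · exact Or.inl (Or.inr ⟨hpG, hP, by omega, hy⟩)
      · exact Or.inr ⟨hpG, hP, by omega, by omega⟩
  have hcard : diffCount k s T ≤ C.card + Q00.card + Q01.card + Q10.card + Q11.card := by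
    calc diffCount k s T ≤ (C ∪ Q00 ∪ Q01 ∪ Q10 ∪ Q11).card := card_le_card hsub
      _ ≤ (C ∪ Q00 ∪ Q01 ∪ Q10).card + Q11.card := card_union_le _ _
      _ ≤ (C ∪ Q00 ∪ Q01).card + Q10.card + Q11.card := by
          have := card_union_le (C ∪ Q00 ∪ Q01) Q10; omega
      _ ≤ (C ∪ Q00).card + Q01.card + Q10.card + Q11.card := by
          have := card_union_le (C ∪ Q00) Q01; omega
      _ ≤ C.card + Q00.card + Q01.card + Q10.card + Q11.card := by
          have := card_union_le C Q00; omega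
  have hCcard : C.card ≤ 2 * k := by
    have hsubC : C ⊆ ({m} ×ˢ Finset.range k) ∪ (Finset.range k ×ˢ {m}) := by
      intro p hp
      rw [hC, mem_filter, hG, mem_product, mem_range, mem_range] at hp
      simp only [mem_union, mem_product, mem_singleton, mem_range]
      omega
    calc C.card ≤ (({m} : Finset ℕ) ×ˢ Finset.range k).card
          + ((Finset.range k) ×ˢ ({m} : Finset ℕ)).card :=
        (card_le_card hsubC).trans (card_union_le _ _)
      _ = 2 * k := by simp [card_product]; ring
  -- the four child regions
  have hQ00card : Q00.card ≤ diffCount m (shiftIm s 0 0) t00 := by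
    apply card_le_card
    intro p hp
    rw [hQ00, mem_filter] at hp
    obtain ⟨_, hP, hx, hy⟩ := hp
    rw [mem_filter, mem_product, mem_range, mem_range]
    refine ⟨⟨hx, hy⟩, ?_⟩
    have : T p = t00 p := by
      have := hA00 p.1 p.2 hx hy
      rwa [Nat.add_zero, Nat.add_zero, Prod.mk.eta] at this
    simp only [shiftIm, Nat.add_zero, Prod.mk.eta]
    rw [← this]; exact hP
  have hQ01card : Q01.card ≤ diffCount m (shiftIm s 0 (m+1)) t01 := by
    apply card_le_card_of_injOn (fun p => (p.1, p.2 - (m+1)))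
    · intro p hp
      rw [Finset.mem_coe, hQ01, mem_filter, hG, mem_product, mem_range, mem_range] at hp
      obtain ⟨⟨h1, h2⟩, hP, hx, hy⟩ := hp
      have hcr : ¬ (p.1 = m ∨ p.2 = m) := by omega
      rw [Finset.mem_coe, mem_filter, mem_product, mem_range, mem_range]
      beta_reduce
      refine ⟨⟨hx, by omega⟩, ?_⟩
      have hpe : ((p.1 + 0 : ℕ), (p.2 - (m+1)) + (m+1)) = p := by
        rw [Prod.mk.injEq]; omega
      have hT : T p = t01 (p.1, p.2 - (m+1)) := by
        rw [← hA01 p.1 (p.2 - (m+1)) hx (by omega), hpe]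
      have hs : shiftIm s 0 (m+1) (p.1, p.2 - (m+1)) = s p := by
        simp only [shiftIm]
        rw [show ((p.1, p.2 - (m+1)).1 + 0, (p.2, p.2).1 - (m+1) + (m+1)) = p from by
          rw [Prod.mk.injEq]; omega]
      rw [hs, ← hT]; exact hP
    · intro p hp q hq hpq
      have hp' := Finset.mem_coe.mp hp
      have hq' := Finset.mem_coe.mp hq
      rw [hQ01, mem_filter, hG, mem_product] at hp' hq'
      simp only [mem_range] at hp' hq'
      simp only [Prod.mk.injEq] at hpq
      obtain ⟨⟨hp1, hp2⟩, -, hpx, hpy⟩ := hp'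
      obtain ⟨⟨hq1, hq2⟩, -, hqx, hqy⟩ := hq'
      rw [Prod.ext_iff]
      constructor <;> omega
  have hQ10card : Q10.card ≤ diffCount m (shiftIm s (m+1) 0) t10 := by
    apply card_le_card_of_injOn (fun p => (p.1 - (m+1), p.2))
    · intro p hp
      rw [Finset.mem_coe, hQ10, mem_filter, hG, mem_product, mem_range, mem_range] at hp
      obtain ⟨⟨h1, h2⟩, hP, hx, hy⟩ := hp
      have hcr : ¬ (p.1 = m ∨ p.2 = m) := by omega
      rw [Finset.mem_coe, mem_filter, mem_product, mem_range, mem_range]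
      beta_reduce
      refine ⟨⟨by omega, hy⟩, ?_⟩
      have hpe : ((p.1 - (m+1)) + (m+1), (p.2 + 0 : ℕ)) = p := by
        rw [Prod.mk.injEq]; omega
      have hT : T p = t10 (p.1 - (m+1), p.2) := by
        rw [← hA10 (p.1 - (m+1)) p.2 (by omega) hy, hpe]
      have hs : shiftIm s (m+1) 0 (p.1 - (m+1), p.2) = s p := by
        simp only [shiftIm]
        rw [show ((p.1 - (m+1) + (m+1) : ℕ), (p.2 + 0 : ℕ)) = p from by
          rw [Prod.mk.injEq]; omega]
      rw [hs, ← hT]; exact hP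
    · intro p hp q hq hpq
      have hp' := Finset.mem_coe.mp hp
      have hq' := Finset.mem_coe.mp hq
      rw [hQ10, mem_filter, hG, mem_product] at hp' hq'
      simp only [mem_range] at hp' hq'
      simp only [Prod.mk.injEq] at hpq
      obtain ⟨⟨hp1, hp2⟩, -, hpx, hpy⟩ := hp'
      obtain ⟨⟨hq1, hq2⟩, -, hqx, hqy⟩ := hq'
      rw [Prod.ext_iff]
      constructor <;> omega
  have hQ11card : Q11.card ≤ diffCount m (shiftIm s (m+1) (m+1)) t11 := by
    apply card_le_card_of_injOn (fun p => (p.1 - (m+1), p.2 - (m+1)))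
    · intro p hp
      rw [Finset.mem_coe, hQ11, mem_filter, hG, mem_product, mem_range, mem_range] at hp
      obtain ⟨⟨h1, h2⟩, hP, hx, hy⟩ := hp
      have hcr : ¬ (p.1 = m ∨ p.2 = m) := by omega
      rw [Finset.mem_coe, mem_filter, mem_product, mem_range, mem_range]
      beta_reduce
      refine ⟨⟨by omega, by omega⟩, ?_⟩
      have hpe : ((p.1 - (m+1)) + (m+1), (p.2 - (m+1)) + (m+1)) = p := by
        rw [Prod.mk.injEq]; omega
      have hT : T p = t11 (p.1 - (m+1), p.2 - (m+1)) := by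
        rw [← hA11 (p.1 - (m+1)) (p.2 - (m+1)) (by omega) (by omega), hpe]
      have hs : shiftIm s (m+1) (m+1) (p.1 - (m+1), p.2 - (m+1)) = s p := by
        simp only [shiftIm]
        rw [show ((p.1 - (m+1) + (m+1) : ℕ), (p.2 - (m+1) + (m+1) : ℕ)) = p from by
          rw [Prod.mk.injEq]; omega]
      rw [hs, ← hT]; exact hP
    · intro p hp q hq hpq
      have hp' := Finset.mem_coe.mp hp
      have hq' := Finset.mem_coe.mp hq
      rw [hQ11, mem_filter, hG, mem_product] at hp' hq'
      simp only [mem_range] at hp' hq'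
      simp only [Prod.mk.injEq] at hpq
      obtain ⟨⟨hp1, hp2⟩, -, hpx, hpy⟩ := hp'
      obtain ⟨⟨hq1, hq2⟩, -, hqx, hqy⟩ := hq'
      rw [Prod.ext_iff]
      constructor <;> omega
  omega
end

section
/- Let s be an image that is ε-far from connected in the sense used, with distance Dist(M, C) ≥ εn². If making all grid pixels of level 0 black (at most εn²/2 pixels) together with making each level-0 square border-connected yields a connected image, then Σ_{s ∈ S_0} lc(s) ≥ εn²/2. -/
open Finset

lemma bc_exists (k : ℕ) (s : ℕ × ℕ → Bool) :
    ∃ u, BorderConnected k u ∧ diffCount k s u = distBC k s := by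
  have hne : {d | ∃ u, BorderConnected k u ∧ diffCount k s u = d}.Nonempty := by
    refine ⟨diffCount k s (fun _ => false), fun _ => false, ?_, rfl⟩
    intro p _ h; simp at h
  exact Nat.sInf_mem hne

lemma bc_congr (k : ℕ) (s u : ℕ × ℕ → Bool)
    (h : ∀ p, InSquare k p → s p = u p) (hu : BorderConnected k u) :
    BorderConnected k s := by
  have hba : ∀ p q, BlackAdj k u p q → BlackAdj k s p q := by
    intro p q ⟨hp, hq, hsp, hsq, ha⟩
    exact ⟨hp, hq, (h p hp).trans hsp, (h q hq).trans hsq, ha⟩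
  intro p hp hsp
  obtain ⟨q, hqb, hqu, hpath⟩ := hu p hp ((h p hp).symm.trans hsp)
  exact ⟨q, hqb, (h q hqb.1).trans hqu, Relation.ReflTransGen.mono hba _ _ hpath⟩


/-- If `M` (of size `n × n`, `n = 2^t + 1`, `ε = 1/2^e`) is `ε`-far from connected,
the grid pixels of level 0 number at most `εn²/2`, and making all grid pixels of
level 0 black together with making each level-0 square border-connected yields a
connected image, then `∑_{s ∈ S₀} lc(s) ≥ εn²/2`. -/
theorem level_zero_local_cost_sum (e t : ℕ) (he : 1 ≤ e) (het : e + 2 ≤ t)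
    (M : ℕ × ℕ → Bool)
    (hfar : ((distConn (2 ^ t + 1) M : ℝ)) ≥
      (1 / 2 ^ e : ℝ) * ((2 ^ t + 1 : ℕ) : ℝ) ^ 2)
    (hgrid : ((((Finset.range (2 ^ t + 1) ×ˢ Finset.range (2 ^ t + 1)).filter
        fun p => 2 ^ (e + 2) ∣ p.1 ∨ 2 ^ (e + 2) ∣ p.2).card : ℝ)) ≤
      (1 / 2 ^ e : ℝ) * ((2 ^ t + 1 : ℕ) : ℝ) ^ 2 / 2)
    (hkey : ∀ M' : ℕ × ℕ → Bool,
      (∀ p : ℕ × ℕ, InSquare (2 ^ t + 1) p →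
        (2 ^ (e + 2) ∣ p.1 ∨ 2 ^ (e + 2) ∣ p.2) → M' p = true) →
      (∀ ab ∈ Finset.range (2 ^ (t - (e + 2))) ×ˢ Finset.range (2 ^ (t - (e + 2))),
        BorderConnected (2 ^ (e + 2) - 1)
          (shiftIm M' (ab.1 * 2 ^ (e + 2) + 1) (ab.2 * 2 ^ (e + 2) + 1))) →
      ImgConnected (2 ^ t + 1) M') :
    (∑ ab ∈ Finset.range (2 ^ (t - (e + 2))) ×ˢ Finset.range (2 ^ (t - (e + 2))),
        ((distBC (2 ^ (e + 2) - 1)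
          (shiftIm M (ab.1 * 2 ^ (e + 2) + 1) (ab.2 * 2 ^ (e + 2) + 1)) : ℝ))) ≥
      (1 / 2 ^ e : ℝ) * ((2 ^ t + 1 : ℕ) : ℝ) ^ 2 / 2 := by
  set K : ℕ := 2 ^ (e + 2) with hK
  set n : ℕ := 2 ^ t + 1 with hn
  set m : ℕ := 2 ^ (t - (e + 2)) with hm
  have hKpos : 0 < K := by positivity
  have hKm : K * m = 2 ^ t := by
    rw [hK, hm, ← pow_add]; congr 1; omega
  -- optimal border-connected replacements
  classical
  choose T hTbc hTdc using fun ab : ℕ × ℕ =>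
    bc_exists (K - 1) (shiftIm M (ab.1 * K + 1) (ab.2 * K + 1))
  -- construct M'
  set M' : ℕ × ℕ → Bool := fun p =>
    if K ∣ p.1 ∨ K ∣ p.2 then true
    else T (p.1 / K, p.2 / K) (p.1 % K - 1, p.2 % K - 1) with hM'
  -- shiftIm M' agrees with T ab on the square
  have hshift : ∀ a b : ℕ, ∀ q : ℕ × ℕ, InSquare (K - 1) q →
      shiftIm M' (a * K + 1) (b * K + 1) q = T (a, b) q := by
    rintro a b ⟨i, j⟩ ⟨hi, hj⟩
    show M' (i + (a * K + 1), j + (b * K + 1)) = T (a, b) (i, j)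
    have h1 : i + (a * K + 1) = a * K + (i + 1) := by ring
    have h2 : j + (b * K + 1) = b * K + (j + 1) := by ring
    have hiK : i + 1 < K := by omega
    have hjK : j + 1 < K := by omega
    have h1' : i + (a * K + 1) = (i + 1) + a * K := by ring
    have h2' : j + (b * K + 1) = (j + 1) + b * K := by ring
    have hmod1 : (i + (a * K + 1)) % K = i + 1 := by
      rw [h1', Nat.add_mul_mod_self_right, Nat.mod_eq_of_lt hiK]
    have hmod2 : (j + (b * K + 1)) % K = j + 1 := by
      rw [h2', Nat.add_mul_mod_self_right, Nat.mod_eq_of_lt hjK]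
    have hd1 : ¬ K ∣ (i + (a * K + 1)) := by
      rw [Nat.dvd_iff_mod_eq_zero]; omega
    have hd2 : ¬ K ∣ (j + (b * K + 1)) := by
      rw [Nat.dvd_iff_mod_eq_zero]; omega
    have hdiv1 : (i + (a * K + 1)) / K = a := by
      rw [h1', Nat.add_mul_div_right _ _ hKpos, Nat.div_eq_of_lt hiK]; omega
    have hdiv2 : (j + (b * K + 1)) / K = b := by
      rw [h2', Nat.add_mul_div_right _ _ hKpos, Nat.div_eq_of_lt hjK]; omega
    simp only [hM']
    rw [if_neg (by push_neg; exact ⟨hd1, hd2⟩)]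
    simp [hdiv1, hdiv2, hmod1, hmod2]
  -- M' is connected
  have hconn : ImgConnected n M' := by
    apply hkey
    · intro p _ hp; simp only [hM', if_pos hp]
    · rintro ⟨a, b⟩ _
      exact bc_congr _ _ _ (hshift a b) (hTbc (a, b))
  -- distConn ≤ diffCount n M M'
  have hdle : distConn n M ≤ diffCount n M M' :=
    Nat.sInf_le ⟨M', hconn, rfl⟩
  -- counting
  set D := (range n ×ˢ range n).filter (fun p => M p ≠ M' p) with hD
  set G := (range n ×ˢ range n).filter (fun p => K ∣ p.1 ∨ K ∣ p.2) with hG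
  set S : ℕ × ℕ → Finset (ℕ × ℕ) := fun ab =>
    (range (K - 1) ×ˢ range (K - 1)).filter
      (fun q => shiftIm M (ab.1 * K + 1) (ab.2 * K + 1) q ≠ T ab q) with hS
  have hScard : ∀ ab : ℕ × ℕ, (S ab).card =
      distBC (K - 1) (shiftIm M (ab.1 * K + 1) (ab.2 * K + 1)) := fun ab => hTdc ab
  -- split D
  have hsplit : D.card ≤ G.card +
      ((range m ×ˢ range m).biUnion
        (fun ab => (S ab).image (fun q => (q.1 + (ab.1 * K + 1), q.2 + (ab.2 * K + 1))))).card := by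
    have : D ⊆ G ∪ (range m ×ˢ range m).biUnion
        (fun ab => (S ab).image (fun q => (q.1 + (ab.1 * K + 1), q.2 + (ab.2 * K + 1)))) := by
      intro p hp
      simp only [hD, mem_filter] at hp
      obtain ⟨hpr, hdiff⟩ := hp
      by_cases hg : K ∣ p.1 ∨ K ∣ p.2
      · exact mem_union_left _ (by simp [hG, hpr, hg])
      push_neg at hg
      obtain ⟨hg1, hg2⟩ := hg
      apply mem_union_right
      have hpr' := hpr
      rw [mem_product, mem_range, mem_range] at hpr'
      obtain ⟨hp1, hp2⟩ := hpr'
      -- p.1 ≠ 2^t since K ∣ 2^t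
      have hKdvd : K ∣ 2 ^ t := Dvd.intro m hKm
      have hp1' : p.1 < 2 ^ t := by
        rcases Nat.lt_or_ge p.1 (2 ^ t) with h | h
        · exact h
        · exfalso; have : p.1 = 2 ^ t := by omega
          exact hg1 (this ▸ hKdvd)
      have hp2' : p.2 < 2 ^ t := by
        rcases Nat.lt_or_ge p.2 (2 ^ t) with h | h
        · exact h
        · exfalso; have : p.2 = 2 ^ t := by omega
          exact hg2 (this ▸ hKdvd)
      set a := p.1 / K with ha_def
      set b := p.2 / K with hb_def
      have ha : a < m := by
        rw [Nat.div_lt_iff_lt_mul hKpos]; calc p.1 < 2 ^ t := hp1'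
          _ = m * K := by rw [← hKm]; ring
      have hb : b < m := by
        rw [Nat.div_lt_iff_lt_mul hKpos]; calc p.2 < 2 ^ t := hp2'
          _ = m * K := by rw [← hKm]; ring
      have hm1 : 1 ≤ p.1 % K := by
        rcases Nat.eq_zero_or_pos (p.1 % K) with h | h
        · exact absurd (Nat.dvd_of_mod_eq_zero h) hg1
        · exact h
      have hm2 : 1 ≤ p.2 % K := by
        rcases Nat.eq_zero_or_pos (p.2 % K) with h | h
        · exact absurd (Nat.dvd_of_mod_eq_zero h) hg2
        · exact h
      set i := p.1 % K - 1 with hi_def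
      set j := p.2 % K - 1 with hj_def
      have hiK : i < K - 1 := by have := Nat.mod_lt p.1 hKpos; omega
      have hjK : j < K - 1 := by have := Nat.mod_lt p.2 hKpos; omega
      have e1 : i + 1 = p.1 % K := by rw [hi_def]; omega
      have e2 : j + 1 = p.2 % K := by rw [hj_def]; omega
      have hrec1 : i + (a * K + 1) = p.1 := by
        calc i + (a * K + 1) = a * K + (i + 1) := by ring
          _ = p.1 / K * K + p.1 % K := by rw [e1, ha_def]
          _ = p.1 := Nat.div_add_mod' p.1 K
      have hrec2 : j + (b * K + 1) = p.2 := by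
        calc j + (b * K + 1) = b * K + (j + 1) := by ring
          _ = p.2 / K * K + p.2 % K := by rw [e2, hb_def]
          _ = p.2 := Nat.div_add_mod' p.2 K
      rw [mem_biUnion]
      refine ⟨(a, b), by simp [ha, hb], ?_⟩
      rw [mem_image]
      refine ⟨(i, j), ?_, by simp [hrec1, hrec2]⟩
      simp only [hS, mem_filter, mem_product, mem_range]
      refine ⟨⟨hiK, hjK⟩, ?_⟩
      have hTval : T (a, b) (i, j) = M' p := by
        rw [← hshift a b (i, j) ⟨hiK, hjK⟩]
        show M' (i + (a * K + 1), j + (b * K + 1)) = M' p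
        rw [hrec1, hrec2]
      have hMval : shiftIm M (a * K + 1) (b * K + 1) (i, j) = M p := by
        show M (i + (a * K + 1), j + (b * K + 1)) = M p
        rw [hrec1, hrec2]
      rw [hTval, hMval]; exact hdiff
    calc D.card ≤ _ := card_le_card this
      _ ≤ _ := card_union_le _ _
  have hbUcard : ((range m ×ˢ range m).biUnion
        (fun ab => (S ab).image (fun q => (q.1 + (ab.1 * K + 1), q.2 + (ab.2 * K + 1))))).card
      ≤ ∑ ab ∈ range m ×ˢ range m, (S ab).card := by
    calc _ ≤ ∑ ab ∈ range m ×ˢ range m,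
        ((S ab).image (fun q => (q.1 + (ab.1 * K + 1), q.2 + (ab.2 * K + 1)))).card :=
          card_biUnion_le
      _ ≤ _ := sum_le_sum (fun ab _ => card_image_le)
  -- put it together in ℕ
  have hnat : distConn n M ≤ G.card + ∑ ab ∈ range m ×ˢ range m, (S ab).card := by
    calc distConn n M ≤ D.card := hdle
      _ ≤ _ := hsplit
      _ ≤ _ := by omega
  -- cast to ℝ
  have hreal : (distConn n M : ℝ) ≤ (G.card : ℝ) +
      ∑ ab ∈ range m ×ˢ range m, ((S ab).card : ℝ) := by
    have h := (Nat.cast_le (α := ℝ)).mpr hnat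
    push_cast at h
    convert h using 2
  have hsum_eq : ∑ ab ∈ range m ×ˢ range m, ((S ab).card : ℝ) =
      ∑ ab ∈ range m ×ˢ range m,
        ((distBC (K - 1) (shiftIm M (ab.1 * K + 1) (ab.2 * K + 1)) : ℝ)) := by
    exact Finset.sum_congr rfl (fun ab _ => by rw [hScard ab])
  rw [← hsum_eq]
  have hGle : (G.card : ℝ) ≤ (1 / 2 ^ e : ℝ) * ((2 ^ t + 1 : ℕ) : ℝ) ^ 2 / 2 := hgrid
  linarith [hfar, hreal]
end

section
/- For every ε ∈ (0, 1) sufficiently small and n > (1/16)·(1/ε)^{5/8}, every image in the support of the hard distribution N has at least 128εn² − 8√ε·n connected components in its image graph, and hence is ε-far from connected. -/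
open Finset

/-- Coloring of the interesting window: a checkerboard of `a × a` squares, where
each white checkerboard square not in the first column is filled with bridges
(every odd row except the last is fully black, except for one disconnecting pixel
whose position is given by `d`). -/
def windowColor (a : ℕ) (d : ℕ × ℕ × ℕ → ℕ) (u v : ℕ) : Bool :=
  let cu := u / a
  let cv := v / a
  if (cu + cv) % 2 = 0 then true
  else if cv = 0 then false
  else
    let r := u % a
    if r % 2 = 1 ∧ r + 1 < a then
      if v % a = d (cu, cv, r) then false else true
    else false

/-- An image from the hard distribution `𝒩`: an interesting window of side `ni`
at window position `(wx, wy)`, filled with the checkerboard/bridge pattern with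
disconnecting pixels given by `d`, together with the column of `ni` black pixels
immediately to its right; all other pixels are white. -/
def hardImage (ni a wx wy : ℕ) (d : ℕ × ℕ × ℕ → ℕ) : ℕ × ℕ → Bool :=
  fun p =>
    if wx * ni ≤ p.1 ∧ p.1 < wx * ni + ni ∧ wy * ni ≤ p.2 ∧ p.2 < wy * ni + ni then
      windowColor a d (p.1 - wx * ni) (p.2 - wy * ni)
    else if p.2 = wy * ni + ni ∧ wx * ni ≤ p.1 ∧ p.1 < wx * ni + ni then true
    else false


namespace HFC

set_option maxHeartbeats 1000000

lemma divmod {a : ℕ} (q r x : ℕ) (hx : x = a * q + r) (hr : r < a) :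
    x / a = q ∧ x % a = r := by
  have h0 : 0 < a := by omega
  exact (Nat.div_mod_unique h0).mpr ⟨by omega, hr⟩

lemma wc_iff (a : ℕ) (d : ℕ × ℕ × ℕ → ℕ) (u v : ℕ) :
    windowColor a d u v = true ↔
      ((u / a + v / a) % 2 = 0 ∨
        ((u / a + v / a) % 2 ≠ 0 ∧ v / a ≠ 0 ∧ (u % a) % 2 = 1 ∧ u % a + 1 < a ∧
          v % a ≠ d (u / a, v / a, u % a))) := by
  unfold windowColor
  dsimp only
  split_ifs with h1 h2 h3 h4 <;> simp_all [-Nat.div_eq_zero_iff] <;> tauto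

lemma hi_iff (ni a wx wy : ℕ) (d : ℕ × ℕ × ℕ → ℕ) (p : ℕ × ℕ) :
    hardImage ni a wx wy d p = true ↔
      ((wx * ni ≤ p.1 ∧ p.1 < wx * ni + ni ∧ wy * ni ≤ p.2 ∧ p.2 < wy * ni + ni) ∧
        windowColor a d (p.1 - wx * ni) (p.2 - wy * ni) = true) ∨
      (p.2 = wy * ni + ni ∧ wx * ni ≤ p.1 ∧ p.1 < wx * ni + ni) := by
  unfold hardImage
  split_ifs with h1 h2 <;> simp_all <;> omega

def lab (K cu cv : ℕ) : ℕ := if K - 1 ≤ cv then K * K else cu * K + cv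

lemma lab_big (K cu cv : ℕ) (h : K - 1 ≤ cv) : lab K cu cv = K * K := if_pos h

lemma lab_small (K cu cv : ℕ) (h : cv < K - 1) : lab K cu cv = cu * K + cv :=
  if_neg (by omega)

def label (a K X Y : ℕ) (d : ℕ × ℕ × ℕ → ℕ) (p : ℕ × ℕ) : ℕ :=
  if p.2 = Y + K * a then K * K
  else
    if ((p.1 - X) / a + (p.2 - Y) / a) % 2 = 0 then lab K ((p.1 - X) / a) ((p.2 - Y) / a)
    else if (p.2 - Y) % a < d ((p.1 - X) / a, (p.2 - Y) / a, (p.1 - X) % a) then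
      lab K ((p.1 - X) / a) ((p.2 - Y) / a - 1)
    else lab K ((p.1 - X) / a) ((p.2 - Y) / a + 1)

lemma label_eval (a K X Y : ℕ) (d : ℕ × ℕ × ℕ → ℕ) (x y : ℕ) (h1 : y ≠ Y + K * a) :
    label a K X Y d (x, y) =
      if ((x - X) / a + (y - Y) / a) % 2 = 0 then lab K ((x - X) / a) ((y - Y) / a)
      else if (y - Y) % a < d ((x - X) / a, (y - Y) / a, (x - X) % a) then
        lab K ((x - X) / a) ((y - Y) / a - 1)
      else lab K ((x - X) / a) ((y - Y) / a + 1) := by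
  unfold label; dsimp only; rw [if_neg h1]

lemma label_line (a K X Y : ℕ) (d : ℕ × ℕ × ℕ → ℕ) (x y : ℕ) (h1 : y = Y + K * a) :
    label a K X Y d (x, y) = K * K := by
  unfold label; dsimp only; rw [if_pos h1]

section Step

variable {a K wx wy : ℕ} {d : ℕ × ℕ × ℕ → ℕ}

lemma stepH (ha : 2 ≤ a) (hae : a % 2 = 0) (hK : 2 ≤ K) (hd : ∀ k, d k < a)
    (x y : ℕ)
    (hp : hardImage (K * a) a wx wy d (x, y) = true)
    (hq : hardImage (K * a) a wx wy d (x, y + 1) = true) :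
    label a K (wx * (K * a)) (wy * (K * a)) d (x, y) =
      label a K (wx * (K * a)) (wy * (K * a)) d (x, y + 1) := by
  have ha0 : 0 < a := by omega
  rw [hi_iff] at hp hq
  dsimp only at hp hq
  set X := wx * (K * a) with hX
  set Y := wy * (K * a) with hY
  rcases hp with ⟨⟨hx1, hx2, hy1, hy2⟩, hc⟩ | hl
  · -- p in window
    rcases hq with ⟨⟨hx1', hx2', hy1', hy2'⟩, hc'⟩ | hl'
    · -- q in window
      rw [label_eval a K X Y d x y (by omega),
          label_eval a K X Y d x (y + 1) (by omega)]
      rw [wc_iff] at hc hc'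
      have hyv : y + 1 - Y = (y - Y) + 1 := by omega
      rw [hyv] at hc' ⊢
      set u := x - X with hu
      set v := y - Y with hv
      set cu := u / a with hcu
      set cv := v / a with hcv
      set ru := u % a with hru
      set rv := v % a with hrv
      have hdu : a * cu + ru = u := Nat.div_add_mod u a
      have hdv : a * cv + rv = v := Nat.div_add_mod v a
      have hmu : ru < a := Nat.mod_lt _ ha0
      have hmv : rv < a := Nat.mod_lt _ ha0
      by_cases hroll : rv + 1 = a
      · obtain ⟨ed, em⟩ := divmod (a := a) (cv + 1) 0 (v + 1)
          (by rw [Nat.mul_succ]; omega) ha0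
        rw [ed, em] at hc' ⊢
        by_cases hpar : (cu + cv) % 2 = 0
        · rw [if_pos hpar, if_neg (by omega)]
          rcases hc' with h | ⟨h1, h2, h3, h4, h5⟩
          · omega
          · rw [if_pos (by omega), Nat.add_sub_cancel]
        · rcases hc with h | ⟨h1, h2, h3, h4, h5⟩
          · omega
          · have hda := hd (cu, cv, ru)
            rw [if_neg hpar, if_neg (by omega), if_pos (by omega)]
      · obtain ⟨ed, em⟩ := divmod (a := a) cv (rv + 1) (v + 1) (by omega) (by omega)
        rw [ed, em] at hc' ⊢
        by_cases hpar : (cu + cv) % 2 = 0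
        · rw [if_pos hpar, if_pos hpar]
        · rcases hc with h | ⟨h1, h2, h3, h4, h5⟩
          · omega
          · rcases hc' with h' | ⟨h1', h2', h3', h4', h5'⟩
            · omega
            · rw [if_neg hpar, if_neg hpar]
              by_cases hlt : rv < d (cu, cv, ru)
              · rw [if_pos hlt, if_pos (by omega)]
              · rw [if_neg hlt, if_neg (by omega)]
    · -- q on the vertical line
      obtain ⟨hl1, hl2, hl3⟩ := hl'
      rw [label_eval a K X Y d x y (by omega), label_line a K X Y d x (y + 1) hl1]
      rw [wc_iff] at hc
      set u := x - X with hu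
      set v := y - Y with hv
      set cu := u / a with hcu
      set cv := v / a with hcv
      set ru := u % a with hru
      set rv := v % a with hrv
      have hdv : a * cv + rv = v := Nat.div_add_mod v a
      have hmv : rv < a := Nat.mod_lt _ ha0
      have hcomm : K * a = a * K := Nat.mul_comm K a
      have h1 : a * (K - 1) + a = a * K := by
        rw [← Nat.mul_succ]; congr 1; omega
      obtain ⟨ed, em⟩ := divmod (a := a) (K - 1) (a - 1) v (by omega) (by omega)
      have ecv : cv = K - 1 := by rw [hcv]; exact ed
      have erv : rv = a - 1 := by rw [hrv]; exact em
      by_cases hpar : (cu + cv) % 2 = 0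
      · rw [if_pos hpar, lab_big K cu cv (by omega)]
      · rcases hc with h | ⟨h1', h2', h3', h4', h5'⟩
        · omega
        · have hda := hd (cu, cv, ru)
          rw [if_neg hpar, if_neg (by omega), lab_big K cu (cv + 1) (by omega)]
  · -- p on the line: q cannot be black
    exfalso
    rcases hq with ⟨⟨hx1', hx2', hy1', hy2'⟩, hc'⟩ | hl' <;> omega

lemma stepV (ha : 2 ≤ a) (hae : a % 2 = 0) (hK : 2 ≤ K) (hd : ∀ k, d k < a)
    (x y : ℕ)
    (hp : hardImage (K * a) a wx wy d (x, y) = true)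
    (hq : hardImage (K * a) a wx wy d (x + 1, y) = true) :
    label a K (wx * (K * a)) (wy * (K * a)) d (x, y) =
      label a K (wx * (K * a)) (wy * (K * a)) d (x + 1, y) := by
  have ha0 : 0 < a := by omega
  rw [hi_iff] at hp hq
  dsimp only at hp hq
  set X := wx * (K * a) with hX
  set Y := wy * (K * a) with hY
  rcases hp with ⟨⟨hx1, hx2, hy1, hy2⟩, hc⟩ | hl
  · rcases hq with ⟨⟨hx1', hx2', hy1', hy2'⟩, hc'⟩ | hl'
    · -- both in window
      rw [label_eval a K X Y d x y (by omega),
          label_eval a K X Y d (x + 1) y (by omega)]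
      rw [wc_iff] at hc hc'
      have hxu : x + 1 - X = (x - X) + 1 := by omega
      rw [hxu] at hc' ⊢
      set u := x - X with hu
      set v := y - Y with hv
      set cu := u / a with hcu
      set cv := v / a with hcv
      set ru := u % a with hru
      set rv := v % a with hrv
      have hdu : a * cu + ru = u := Nat.div_add_mod u a
      have hmu : ru < a := Nat.mod_lt _ ha0
      by_cases hroll : ru + 1 = a
      · obtain ⟨ed, em⟩ := divmod (a := a) (cu + 1) 0 (u + 1)
          (by rw [Nat.mul_succ]; omega) ha0
        rw [ed, em] at hc' ⊢
        exfalso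
        omega
      · obtain ⟨ed, em⟩ := divmod (a := a) cu (ru + 1) (u + 1) (by omega) (by omega)
        rw [ed, em] at hc' ⊢
        by_cases hpar : (cu + cv) % 2 = 0
        · rw [if_pos hpar, if_pos hpar]
        · exfalso
          omega
    · exfalso; omega
  · rcases hq with ⟨⟨hx1', hx2', hy1', hy2'⟩, hc'⟩ | hl'
    · exfalso; omega
    · rw [label_line a K X Y d x y hl.1, label_line a K X Y d (x + 1) y hl'.1]

lemma adj_symm {p q : ℕ × ℕ} (h : Adj p q) : Adj q p := by
  unfold Adj at *; omega

lemma inv (ha : 2 ≤ a) (hae : a % 2 = 0) (hK : 2 ≤ K) (hd : ∀ k, d k < a)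
    (p q : ℕ × ℕ)
    (hp : hardImage (K * a) a wx wy d p = true)
    (hq : hardImage (K * a) a wx wy d q = true)
    (hadj : Adj p q) :
    label a K (wx * (K * a)) (wy * (K * a)) d p =
      label a K (wx * (K * a)) (wy * (K * a)) d q := by
  obtain ⟨px, py⟩ := p
  obtain ⟨qx, qy⟩ := q
  rcases hadj with ⟨h1, h2 | h2⟩ | ⟨h1, h2 | h2⟩ <;> dsimp only at h1 h2
  · have e : (qx, qy) = (px, py + 1) := by simp only [Prod.mk.injEq]; omega
    rw [e] at hq ⊢
    exact stepH ha hae hK hd px py hp hq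
  · have e : (px, py) = (qx, qy + 1) := by simp only [Prod.mk.injEq]; omega
    rw [e] at hp ⊢
    exact (stepH ha hae hK hd qx qy hq hp).symm
  · have e : (qx, qy) = (px + 1, py) := by simp only [Prod.mk.injEq]; omega
    rw [e] at hq ⊢
    exact stepV ha hae hK hd px py hp hq
  · have e : (px, py) = (qx + 1, qy) := by simp only [Prod.mk.injEq]; omega
    rw [e] at hp ⊢
    exact (stepV ha hae hK hd qx qy hq hp).symm

lemma rep_black (ha : 2 ≤ a) (hK : 2 ≤ K) (m c : ℕ) (hm : m < K / 2) (hc : c < K) :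
    hardImage (K * a) a wx wy d
      (wx * (K * a) + (2 * m + c % 2) * a, wy * (K * a) + c * a) = true := by
  have ha0 : 0 < a := by omega
  rw [hi_iff]
  left
  dsimp only
  have hcu : 2 * m + c % 2 < K := by omega
  have h1 : (2 * m + c % 2 + 1) * a ≤ K * a := Nat.mul_le_mul_right a (by omega)
  have h1' : (2 * m + c % 2 + 1) * a = (2 * m + c % 2) * a + a := Nat.succ_mul _ a
  have h2 : (c + 1) * a ≤ K * a := Nat.mul_le_mul_right a (by omega)
  have h2' : (c + 1) * a = c * a + a := Nat.succ_mul _ a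
  refine ⟨⟨by omega, by omega, by omega, by omega⟩, ?_⟩
  rw [Nat.add_sub_cancel_left, Nat.add_sub_cancel_left, wc_iff]
  left
  rw [Nat.mul_div_cancel _ ha0, Nat.mul_div_cancel _ ha0]
  omega

lemma rep_insquare (ha : 2 ≤ a) (hK : 2 ≤ K) {n : ℕ}
    (hb1 : wx * (K * a) + K * a < n) (hb2 : wy * (K * a) + K * a < n)
    (m c : ℕ) (hm : m < K / 2) (hc : c < K) :
    InSquare n (wx * (K * a) + (2 * m + c % 2) * a, wy * (K * a) + c * a) := by
  have h1 : (2 * m + c % 2 + 1) * a ≤ K * a := Nat.mul_le_mul_right a (by omega)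
  have h1' : (2 * m + c % 2 + 1) * a = (2 * m + c % 2) * a + a := Nat.succ_mul _ a
  have h2 : (c + 1) * a ≤ K * a := Nat.mul_le_mul_right a (by omega)
  have h2' : (c + 1) * a = c * a + a := Nat.succ_mul _ a
  exact ⟨by dsimp only; omega, by dsimp only; omega⟩

lemma label_rep (ha : 2 ≤ a) (hK : 2 ≤ K) (m c : ℕ) (hm : m < K / 2) (hc : c < K - 1) :
    label a K (wx * (K * a)) (wy * (K * a)) d
      (wx * (K * a) + (2 * m + c % 2) * a, wy * (K * a) + c * a) =
      (2 * m + c % 2) * K + c := by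
  have ha0 : 0 < a := by omega
  have hne : wy * (K * a) + c * a ≠ wy * (K * a) + K * a := by
    have : (c + 1) * a ≤ K * a := Nat.mul_le_mul_right a (by omega)
    have h2' : (c + 1) * a = c * a + a := Nat.succ_mul _ a
    omega
  rw [label_eval a K _ _ d _ _ hne, Nat.add_sub_cancel_left, Nat.add_sub_cancel_left,
    Nat.mul_div_cancel _ ha0, Nat.mul_div_cancel _ ha0, if_pos (by omega)]
  exact lab_small K _ c hc

lemma ell_inj (hK : 2 ≤ K) {m1 c1 m2 c2 : ℕ} (h1 : c1 < K - 1) (h2 : c2 < K - 1)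
    (e : (2 * m1 + c1 % 2) * K + c1 = (2 * m2 + c2 % 2) * K + c2) :
    m1 = m2 ∧ c1 = c2 := by
  have d1 := divmod (a := K) (2 * m1 + c1 % 2) c1 ((2 * m1 + c1 % 2) * K + c1)
    (by ring) (by omega)
  have d2 := divmod (a := K) (2 * m2 + c2 % 2) c2 ((2 * m2 + c2 % 2) * K + c2)
    (by ring) (by omega)
  rw [e] at d1
  omega

lemma reach_label (ha : 2 ≤ a) (hae : a % 2 = 0) (hK : 2 ≤ K) (hd : ∀ k, d k < a)
    {n : ℕ}
    (v w : {p : ℕ × ℕ // InSquare n p ∧ hardImage (K * a) a wx wy d p = true})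
    (h : (imageGraph n (hardImage (K * a) a wx wy d)).Reachable v w) :
    label a K (wx * (K * a)) (wy * (K * a)) d v.1 =
      label a K (wx * (K * a)) (wy * (K * a)) d w.1 := by
  obtain ⟨pw⟩ := h
  induction pw with
  | nil => rfl
  | @cons u' v' w' hadj _ ih =>
    exact (inv ha hae hK hd u'.1 v'.1 u'.2.2 v'.2.2 hadj).trans ih

lemma comp_count {n : ℕ} (ha : 2 ≤ a) (hae : a % 2 = 0) (hK : 2 ≤ K) (hKe : K % 2 = 0)
    (hd : ∀ k, d k < a)
    (hb1 : wx * (K * a) + K * a < n) (hb2 : wy * (K * a) + K * a < n) :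
    K / 2 * (K - 1) ≤ numComponents n (hardImage (K * a) a wx wy d) := by
  classical
  set M := hardImage (K * a) a wx wy d with hM
  haveI : Finite {p : ℕ × ℕ // InSquare n p ∧ M p = true} := by
    apply Finite.of_injective
      (fun v => ((⟨v.1.1, v.2.1.1⟩ : Fin n), (⟨v.1.2, v.2.1.2⟩ : Fin n)))
    intro v w h
    rw [Prod.mk.injEq, Fin.mk.injEq, Fin.mk.injEq] at h
    exact Subtype.ext (Prod.ext h.1 h.2)
  haveI : Finite (imageGraph n M).ConnectedComponent := by
    unfold SimpleGraph.ConnectedComponent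
    infer_instance
  have hrepB : ∀ m c : ℕ, m < K / 2 → c < K - 1 →
      InSquare n (wx * (K * a) + (2 * m + c % 2) * a, wy * (K * a) + c * a) ∧
      M (wx * (K * a) + (2 * m + c % 2) * a, wy * (K * a) + c * a) = true := by
    intro m c hm hc
    exact ⟨rep_insquare ha hK hb1 hb2 m c hm (by omega),
      rep_black ha hK m c hm (by omega)⟩
  let F : Fin (K / 2) × Fin (K - 1) → (imageGraph n M).ConnectedComponent :=
    fun s => (imageGraph n M).connectedComponentMk
      ⟨(wx * (K * a) + (2 * s.1.1 + s.2.1 % 2) * a, wy * (K * a) + s.2.1 * a),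
        hrepB s.1.1 s.2.1 s.1.2 s.2.2⟩
  have hinj : Function.Injective F := by
    rintro ⟨⟨m1, hm1⟩, ⟨c1, hc1⟩⟩ ⟨⟨m2, hm2⟩, ⟨c2, hc2⟩⟩ hF
    have hreach := (SimpleGraph.ConnectedComponent.eq).mp hF
    have h := reach_label ha hae hK hd _ _ hreach
    dsimp only at h
    rw [label_rep ha hK m1 c1 hm1 hc1, label_rep ha hK m2 c2 hm2 hc2] at h
    obtain ⟨e1, e2⟩ := ell_inj hK hc1 hc2 h
    simp [Prod.ext_iff, Fin.ext_iff, e1, e2]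
  calc K / 2 * (K - 1) = Nat.card (Fin (K / 2) × Fin (K - 1)) := by
        simp [Nat.card_eq_fintype_card]
    _ ≤ Nat.card (imageGraph n M).ConnectedComponent :=
        Nat.card_le_card_of_injective F hinj

def nbr (p : ℕ × ℕ) : ℕ → ℕ × ℕ
  | 0 => p
  | 1 => (p.1 + 1, p.2)
  | 2 => (p.1 - 1, p.2)
  | 3 => (p.1, p.2 + 1)
  | _ => (p.1, p.2 - 1)

lemma adj_nbr {p q : ℕ × ℕ} (h : Adj p q) : ∃ j, j < 5 ∧ nbr p j = q := by
  rcases h with ⟨h1, h2 | h2⟩ | ⟨h1, h2 | h2⟩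
  · exact ⟨3, by omega, by unfold nbr; rw [Prod.ext_iff]; constructor <;> dsimp -failIfUnchanged <;> omega⟩
  · exact ⟨4, by omega, by show (p.1, p.2 - 1) = q; rw [Prod.ext_iff]; constructor <;> dsimp <;> omega⟩
  · exact ⟨1, by omega, by unfold nbr; rw [Prod.ext_iff]; constructor <;> dsimp -failIfUnchanged <;> omega⟩
  · exact ⟨2, by omega, by show (p.1 - 1, p.2) = q; rw [Prod.ext_iff]; constructor <;> dsimp <;> omega⟩

lemma dist_lb {n : ℕ} (ha : 2 ≤ a) (hae : a % 2 = 0) (hK : 2 ≤ K) (hKe : K % 2 = 0)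
    (hd : ∀ k, d k < a)
    (hb1 : wx * (K * a) + K * a < n) (hb2 : wy * (K * a) + K * a < n)
    (t' : ℕ × ℕ → Bool) (hconn : ImgConnected n t') :
    K / 2 * (K - 1) ≤ 5 * diffCount n (hardImage (K * a) a wx wy d) t' + 1 := by
  classical
  set M := hardImage (K * a) a wx wy d with hM
  set X := wx * (K * a) with hX
  set Y := wy * (K * a) with hY
  set D := (Finset.range n ×ˢ Finset.range n).filter (fun p => M p ≠ t' p) with hD
  set Touch : ℕ × ℕ → Prop := fun s =>
    ∃ pj : (ℕ × ℕ) × ℕ, pj.1 ∈ D ∧ pj.2 < 5 ∧ (InSquare n (nbr pj.1 pj.2) ∧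
      M (nbr pj.1 pj.2) = true ∧
      label a K X Y d (nbr pj.1 pj.2) = (2 * s.1 + s.2 % 2) * K + s.2) with hTouch
  have hrepB : ∀ s : ℕ × ℕ, s.1 < K / 2 → s.2 < K - 1 →
      InSquare n (X + (2 * s.1 + s.2 % 2) * a, Y + s.2 * a) ∧
      M (X + (2 * s.1 + s.2 % 2) * a, Y + s.2 * a) = true ∧
      label a K X Y d (X + (2 * s.1 + s.2 % 2) * a, Y + s.2 * a) =
        (2 * s.1 + s.2 % 2) * K + s.2 := by
    intro s hm hc
    exact ⟨rep_insquare ha hK hb1 hb2 s.1 s.2 hm (by omega),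
      rep_black ha hK s.1 s.2 hm (by omega), label_rep ha hK s.1 s.2 hm hc⟩
  have key1 : ∀ s : ℕ × ℕ, s.1 < K / 2 → s.2 < K - 1 → ¬ Touch s →
      ∀ q, Relation.ReflTransGen (BlackAdj n t')
        (X + (2 * s.1 + s.2 % 2) * a, Y + s.2 * a) q →
      InSquare n q ∧ M q = true ∧
        label a K X Y d q = (2 * s.1 + s.2 % 2) * K + s.2 := by
    intro s hm hc hT q hq
    induction hq with
    | refl => exact hrepB s hm hc
    | @tail b c hab hbc ih =>
      obtain ⟨hinb, hinc, htb, htc, hadj⟩ := hbc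
      obtain ⟨ihin, ihM, ihlab⟩ := ih
      by_cases hMc : M c = t' c
      · refine ⟨hinc, hMc.trans htc, ?_⟩
        have := inv ha hae hK hd b c ihM (hMc.trans htc) hadj
        rw [← hX, ← hY] at this
        omega
      · exfalso
        apply hT
        obtain ⟨j, hj5, hjq⟩ := adj_nbr (adj_symm hadj)
        refine ⟨(c, j), ?_, hj5, ?_⟩
        · rw [hD, Finset.mem_filter, Finset.mem_product, Finset.mem_range, Finset.mem_range]
          exact ⟨⟨hinc.1, hinc.2⟩, hMc⟩
        · dsimp only
          rw [hjq]
          exact ⟨hinb, ihM, ihlab⟩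
  have key1b : ∀ s : ℕ × ℕ, s.1 < K / 2 → s.2 < K - 1 → ¬ Touch s →
      t' (X + (2 * s.1 + s.2 % 2) * a, Y + s.2 * a) = true := by
    intro s hm hc hT
    by_contra hne
    apply hT
    refine ⟨((X + (2 * s.1 + s.2 % 2) * a, Y + s.2 * a), 0), ?_, by omega, ?_⟩
    · rw [hD, Finset.mem_filter, Finset.mem_product, Finset.mem_range, Finset.mem_range]
      refine ⟨⟨(hrepB s hm hc).1.1, (hrepB s hm hc).1.2⟩, ?_⟩
      rw [(hrepB s hm hc).2.1]
      exact fun h => hne h.symm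
    · exact (hrepB s hm hc)
  have key2 : ∀ s1 s2 : ℕ × ℕ, s1.1 < K / 2 → s1.2 < K - 1 → s2.1 < K / 2 → s2.2 < K - 1 →
      ¬ Touch s1 → ¬ Touch s2 → s1 = s2 := by
    intro s1 s2 hm1 hc1 hm2 hc2 hT1 hT2
    have hr := hconn _ _ (hrepB s1 hm1 hc1).1 (hrepB s2 hm2 hc2).1
      (key1b s1 hm1 hc1 hT1) (key1b s2 hm2 hc2 hT2)
    have h := (key1 s1 hm1 hc1 hT1 _ hr).2.2
    rw [(hrepB s2 hm2 hc2).2.2] at h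
    obtain ⟨e1, e2⟩ := ell_inj hK hc2 hc1 h
    exact Prod.ext e1.symm e2.symm
  set T := Finset.range (K / 2) ×ˢ Finset.range (K - 1) with hT'
  have memT : ∀ s ∈ T, s.1 < K / 2 ∧ s.2 < K - 1 := by
    intro s hs
    rw [hT', Finset.mem_product, Finset.mem_range, Finset.mem_range] at hs
    exact hs
  have hcard1 : (T.filter (fun s => ¬ Touch s)).card ≤ 1 := by
    rw [Finset.card_le_one]
    intro s hs s' hs'
    rw [Finset.mem_filter] at hs hs'
    exact key2 s s' (memT s hs.1).1 (memT s hs.1).2 (memT s' hs'.1).1 (memT s' hs'.1).2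
      hs.2 hs'.2
  have hcard2 : (T.filter (fun s => Touch s)).card ≤ D.card * 5 := by
    have h := Finset.card_le_card_of_injOn
      (f := fun s => if h : Touch s then h.choose else ((0,0),0))
      (s := T.filter (fun s => Touch s)) (t := D ×ˢ Finset.range 5) ?_ ?_
    · rw [Finset.card_product, Finset.card_range] at h
      exact h
    · intro s hs
      rw [Finset.mem_coe, Finset.mem_filter] at hs
      dsimp only
      rw [dif_pos hs.2, Finset.mem_coe, Finset.mem_product, Finset.mem_range]
      exact ⟨hs.2.choose_spec.1, hs.2.choose_spec.2.1⟩
    · intro s1 hs1 s2 hs2 he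
      simp only [Finset.coe_filter, Set.mem_setOf_eq] at hs1 hs2
      obtain ⟨hs1T, h1⟩ := hs1
      obtain ⟨hs2T, h2⟩ := hs2
      dsimp only at he
      rw [dif_pos h1, dif_pos h2] at he
      have hl1 := h1.choose_spec.2.2.2.2
      have hl2 := h2.choose_spec.2.2.2.2
      rw [he] at hl1
      have heq : (2 * s1.1 + s1.2 % 2) * K + s1.2 = (2 * s2.1 + s2.2 % 2) * K + s2.2 :=
        hl1.symm.trans hl2
      obtain ⟨e1, e2⟩ := ell_inj hK (memT s1 hs1T).2 (memT s2 hs2T).2 heq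
      exact Prod.ext e1 e2
  have hsplit := Finset.card_filter_add_card_filter_not
    (s := T) (p := fun s => Touch s)
  have hTcard : T.card = K / 2 * (K - 1) := by
    rw [hT', Finset.card_product, Finset.card_range, Finset.card_range]
  have hDc : diffCount n M t' = D.card := rfl
  omega

end Step

end HFC

/-- Every image in the support of the hard distribution `𝒩` (with `n = 2^t`,
`ε = 1/2^e`, level `i ∈ {e/8,…,e/4}`, `a_i = 2^i`, `n_i = 16·√ε·n·a_i`, and
`n > (1/16)(1/ε)^{5/8}`) has at least `128εn² − 8√ε·n` connected components in its
image graph, and hence is `ε`-far from connected. -/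
theorem hard_distribution_far_from_connected (t e : ℕ) (he8 : 8 ∣ e) (he : 16 ≤ e)
    (hn : ((2 : ℝ) ^ t) > (1 / 16) * ((2 : ℝ) ^ e) ^ ((5 : ℝ) / 8))
    (i : ℕ) (hi1 : e / 8 ≤ i) (hi2 : i ≤ e / 4)
    (wx wy : ℕ)
    (hwx : wx < 2 ^ t / 2 ^ (t + i + 4 - e / 2))
    (hwy : wy < 2 ^ t / 2 ^ (t + i + 4 - e / 2))
    (d : ℕ × ℕ × ℕ → ℕ) (hd : ∀ key, d key < 2 ^ i) :
    ((numComponents (2 ^ t + 1)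
        (hardImage (2 ^ (t + i + 4 - e / 2)) (2 ^ i) wx wy d) : ℝ)) ≥
      128 * (1 / 2 ^ e : ℝ) * ((2 : ℝ) ^ t) ^ 2 -
        8 * Real.sqrt (1 / 2 ^ e : ℝ) * (2 : ℝ) ^ t ∧
    ((distConn (2 ^ t + 1)
        (hardImage (2 ^ (t + i + 4 - e / 2)) (2 ^ i) wx wy d) : ℝ)) ≥
      (1 / 2 ^ e : ℝ) * ((2 : ℝ) ^ t) ^ 2 := by
  obtain ⟨m, rfl⟩ := he8
  have hm2 : 2 ≤ m := by omega
  have hi1' : m ≤ i := by omega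
  have hi2' : i ≤ 2 * m := by omega
  have ht4 : 5 * m < t + 4 := by
    have h1 : ((2 : ℝ) ^ (8 * m)) ^ ((5 : ℝ) / 8) = (2 : ℝ) ^ (5 * m) := by
      rw [← Real.rpow_natCast (2 : ℝ) (8 * m), ← Real.rpow_mul (by norm_num),
        ← Real.rpow_natCast (2 : ℝ) (5 * m)]
      congr 1
      push_cast
      ring
    rw [h1] at hn
    by_contra hcon
    have h2 : (2 : ℝ) ^ (t + 4) ≤ (2 : ℝ) ^ (5 * m) :=
      pow_le_pow_right₀ (by norm_num) (by omega)
    have h3 : (2 : ℝ) ^ (t + 4) = 16 * 2 ^ t := by rw [pow_add]; ring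
    linarith
  obtain ⟨j, hj, hjm⟩ : ∃ j, t + 4 = 4 * m + j ∧ m + 1 ≤ j := ⟨t + 4 - 4 * m, by omega, by omega⟩
  have hni : (2 : ℕ) ^ (t + i + 4 - 8 * m / 2) = 2 ^ j * 2 ^ i := by
    rw [← pow_add]
    congr 1
    omega
  rw [hni] at hwx hwy ⊢
  have ha : 2 ≤ 2 ^ i := by
    have : (2 : ℕ) ^ 1 ≤ 2 ^ i := Nat.pow_le_pow_right (by norm_num) (by omega)
    simpa using this
  have hae : 2 ^ i % 2 = 0 := by
    have h2 : (2 : ℕ) ^ i = 2 ^ (i - 1) * 2 := by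
      rw [← pow_succ]
      congr 1
      omega
    omega
  have hK : 2 ≤ 2 ^ j := by
    have : (2 : ℕ) ^ 1 ≤ 2 ^ j := Nat.pow_le_pow_right (by norm_num) (by omega)
    simpa using this
  have hKe : 2 ^ j % 2 = 0 := by
    have h2 : (2 : ℕ) ^ j = 2 ^ (j - 1) * 2 := by
      rw [← pow_succ]
      congr 1
      omega
    omega
  have h2t : (2 : ℕ) ^ t = 2 ^ j * 2 ^ i * 2 ^ (4 * m - 4 - i) := by
    rw [← pow_add, ← pow_add]
    congr 1
    omega
  have hb1 : wx * (2 ^ j * 2 ^ i) + 2 ^ j * 2 ^ i < 2 ^ t + 1 := by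
    have hx1 : wx + 1 ≤ 2 ^ t / (2 ^ j * 2 ^ i) := by omega
    calc wx * (2 ^ j * 2 ^ i) + 2 ^ j * 2 ^ i = (wx + 1) * (2 ^ j * 2 ^ i) := by ring
      _ ≤ (2 ^ t / (2 ^ j * 2 ^ i)) * (2 ^ j * 2 ^ i) := Nat.mul_le_mul_right _ hx1
      _ ≤ 2 ^ t := Nat.div_mul_le_self _ _
      _ < 2 ^ t + 1 := by omega
  have hb2 : wy * (2 ^ j * 2 ^ i) + 2 ^ j * 2 ^ i < 2 ^ t + 1 := by
    have hx1 : wy + 1 ≤ 2 ^ t / (2 ^ j * 2 ^ i) := by omega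
    calc wy * (2 ^ j * 2 ^ i) + 2 ^ j * 2 ^ i = (wy + 1) * (2 ^ j * 2 ^ i) := by ring
      _ ≤ (2 ^ t / (2 ^ j * 2 ^ i)) * (2 ^ j * 2 ^ i) := Nat.mul_le_mul_right _ hx1
      _ ≤ 2 ^ t := Nat.div_mul_le_self _ _
      _ < 2 ^ t + 1 := by omega
  -- real-number preliminaries
  have ht' : (2 : ℝ) ^ t = 2 ^ (4 * m) * 2 ^ j / 16 := by
    rw [eq_div_iff (by norm_num : (16 : ℝ) ≠ 0), ← pow_add,
      show 4 * m + j = t + 4 by omega, pow_add]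
    norm_num
  have h8m : (2 : ℝ) ^ (8 * m) = (2 ^ (4 * m)) ^ 2 := by
    rw [← pow_mul]
    congr 1
    omega
  have hBj : (2 : ℝ) ^ j = 2 * 2 ^ (j - 1) := by
    rw [← pow_succ']
    congr 1
    omega
  have hsqrt : Real.sqrt (1 / 2 ^ (8 * m)) = ((2 : ℝ) ^ (4 * m))⁻¹ := by
    rw [show (1 : ℝ) / 2 ^ (8 * m) = (((2 : ℝ) ^ (4 * m))⁻¹) ^ 2 by
      rw [h8m]; field_simp]
    exact Real.sqrt_sq (by positivity)
  have hK2 : (2 : ℕ) ^ j / 2 = 2 ^ (j - 1) := by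
    have h2 : (2 : ℕ) ^ j = 2 ^ (j - 1) * 2 := by
      rw [← pow_succ]
      congr 1
      omega
    omega
  have hcast2 : (((2 : ℕ) ^ j / 2 * (2 ^ j - 1) : ℕ) : ℝ) =
      2 ^ (j - 1) * ((2 : ℝ) ^ j - 1) := by
    rw [hK2, Nat.cast_mul, Nat.cast_sub Nat.one_le_two_pow]
    push_cast
    ring
  constructor
  · -- component count
    have hcomp := HFC.comp_count (a := 2 ^ i) (K := 2 ^ j) (wx := wx) (wy := wy) (d := d)
      (n := 2 ^ t + 1) ha hae hK hKe hd hb1 hb2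
    have key : 128 * (1 / 2 ^ (8 * m) : ℝ) * ((2 : ℝ) ^ t) ^ 2 -
        8 * Real.sqrt (1 / 2 ^ (8 * m) : ℝ) * (2 : ℝ) ^ t =
        2 ^ (j - 1) * ((2 : ℝ) ^ j - 1) := by
      rw [hsqrt, ht', h8m, hBj]
      have hne : ((2 : ℝ) ^ (4 * m)) ≠ 0 := by positivity
      field_simp
      ring
    rw [ge_iff_le, key, ← hcast2]
    exact_mod_cast hcomp
  · -- distance
    have hwhite : ImgConnected (2 ^ t + 1) (fun _ => false) := by
      intro p q _ _ hp _
      simp at hp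
    have hmem : distConn (2 ^ t + 1) (hardImage (2 ^ j * 2 ^ i) (2 ^ i) wx wy d) ∈
        {d0 | ∃ tt, ImgConnected (2 ^ t + 1) tt ∧
          diffCount (2 ^ t + 1) (hardImage (2 ^ j * 2 ^ i) (2 ^ i) wx wy d) tt = d0} :=
      Nat.sInf_mem ⟨_, (fun _ => false), hwhite, rfl⟩
    obtain ⟨t', hconn', hdc⟩ := hmem
    have hnat := HFC.dist_lb (a := 2 ^ i) (K := 2 ^ j) (wx := wx) (wy := wy) (d := d)
      (n := 2 ^ t + 1) ha hae hK hKe hd hb1 hb2 t' hconn'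
    rw [hdc] at hnat
    have hreal : (2 : ℝ) ^ (j - 1) * ((2 : ℝ) ^ j - 1) ≤
        5 * (distConn (2 ^ t + 1) (hardImage (2 ^ j * 2 ^ i) (2 ^ i) wx wy d) : ℝ) + 1 := by
      rw [← hcast2]
      exact_mod_cast hnat
    have hkey2 : (1 / 2 ^ (8 * m) : ℝ) * ((2 : ℝ) ^ t) ^ 2 = ((2 : ℝ) ^ j) ^ 2 / 256 := by
      rw [ht', h8m]
      have hne : ((2 : ℝ) ^ (4 * m)) ≠ 0 := by positivity
      field_simp
      ring
    rw [ge_iff_le, hkey2]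
    have hx8 : (8 : ℝ) ≤ 2 ^ j := by
      have h : (2 : ℝ) ^ 3 ≤ 2 ^ j := pow_le_pow_right₀ one_le_two (by omega)
      norm_num at h
      exact h
    have hd0 : (0 : ℝ) ≤ (distConn (2 ^ t + 1) (hardImage (2 ^ j * 2 ^ i) (2 ^ i) wx wy d) : ℝ) :=
      Nat.cast_nonneg _
    nlinarith [hreal, hx8, hBj, hd0]
end
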